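/- For every integer N ≥ 2, the trace of the square of the quantized alternating Hilbert matrix A_N^quant equals -(sin(π/N))²·(N-1)N(N+1)/3. -/

import Mathlib

open Finset Real Complex

lemma polyident (x : ℂ) (n : ℕ) :
    (x - 1) * ∑ j ∈ range n, (j : ℂ) * x ^ j
      = ((n : ℂ) - 1) * x ^ n - (∑ j ∈ range n, x ^ j) + 1 := by
  induction n with
  | zero => simp
  | succ n ih =>
    rw [sum_range_succ, sum_range_succ, mul_add, ih]
    push_cast
    ring

lemma int_dvd_zero {N : ℕ} {t : ℤ} (h : (N:ℤ) ∣ t) (h1 : |t| < N) : t = 0 := by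
  rcases h with ⟨c, rfl⟩
  by_contra hc
  have hc' : c ≠ 0 := by rintro rfl; simp at hc
  have h2 : 1 ≤ |c| := Int.one_le_abs (by exact_mod_cast hc')
  have h3 : (0:ℤ) ≤ N := Int.natCast_nonneg N
  rw [abs_mul, abs_of_nonneg h3] at h1
  nlinarith
variable (N : ℕ)

noncomputable def ee (N : ℕ) (t : ℤ) : ℂ := Complex.exp (2 * Real.pi * Complex.I * t / N)

variable {N}

lemma ee_add (s t : ℤ) : ee N (s + t) = ee N s * ee N t := by
  rw [ee, ee, ee, ← Complex.exp_add]
  push_cast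
  ring_nf

lemma ee_pow (t : ℤ) (k : ℕ) : (ee N t) ^ k = ee N (t * k) := by
  rw [ee, ee, ← Complex.exp_nat_mul]
  push_cast
  ring_nf

lemma ee_eq_one (hN : 0 < N) {t : ℤ} (h : (N:ℤ) ∣ t) : ee N t = 1 := by
  rcases h with ⟨c, rfl⟩
  rw [ee, Complex.exp_eq_one_iff]
  refine ⟨c, ?_⟩
  have hN' : (N:ℂ) ≠ 0 := by exact_mod_cast hN.ne'
  field_simp
  push_cast
  ring
lemma ee_ne_one (hN : 0 < N) {t : ℤ} (h : ¬ (N:ℤ) ∣ t) : ee N t ≠ 1 := by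
  intro hc
  rw [ee, Complex.exp_eq_one_iff] at hc
  rcases hc with ⟨n, hn⟩
  apply h
  refine ⟨n, ?_⟩
  have hN' : (N:ℂ) ≠ 0 := by exact_mod_cast hN.ne'
  field_simp at hn
  have h2 : (2:ℂ) * Real.pi * Complex.I ≠ 0 := by
    simp [Real.pi_ne_zero, Complex.I_ne_zero, Complex.ofReal_ne_zero]
  have : (t : ℂ) = (n:ℂ) * N := by
    apply mul_left_cancel₀ h2
    rw [hn]; ring
  have h3 : t = n * N := by exact_mod_cast this
  rw [h3]; ring

lemma ee_orth (hN : 0 < N) {t : ℤ} (h : ¬ (N:ℤ) ∣ t) :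
    ∑ k ∈ range N, ee N (t * k) = 0 := by
  have h1 : ∀ k ∈ range N, ee N (t * k) = (ee N t)^k := by
    intro k _; rw [ee_pow]
  rw [sum_congr rfl h1, geom_sum_eq (ee_ne_one hN h), ee_pow, ee_eq_one hN ⟨t, by ring⟩]
  simp

lemma ee_conj (t : ℤ) : (starRingEnd ℂ) (ee N t) = ee N (-t) := by
  rw [ee, ee, ← Complex.exp_conj]
  congr 1
  have : (2 * Real.pi * Complex.I * t / N) = ((( (2 * Real.pi * t / N)) :ℝ) : ℂ) * Complex.I := by
    push_cast; ring
  rw [this, map_mul, Complex.conj_ofReal, Complex.conj_I]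
  push_cast
  ring


noncomputable def SS (N : ℕ) (k : ℕ) : ℂ := ∑ j ∈ range N, (j : ℂ) * ee N (j * k)

variable {N : ℕ}

lemma claimA (hN : 0 < N) {k : ℕ} (hk1 : 1 ≤ k) (hk2 : k < N) :
    (ee N k - 1) * SS N k = N := by
  have hdvd : ¬ (N:ℤ) ∣ (k:ℤ) := by
    intro h
    have := int_dvd_zero h (by rw [abs_of_nonneg (Int.natCast_nonneg k)]; exact_mod_cast hk2)
    omega
  have h1 : SS N k = ∑ j ∈ range N, (j : ℂ) * (ee N k) ^ j := by
    apply sum_congr rfl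
    intro j _
    rw [ee_pow]
    congr 2
    push_cast; ring
  rw [h1, polyident, ee_pow, ee_eq_one hN ⟨k, by push_cast; ring⟩]
  have h2 : ∑ j ∈ range N, (ee N k)^j = 0 := by
    have := ee_orth hN hdvd
    rw [← this]
    apply sum_congr rfl
    intro j _
    rw [ee_pow]
  rw [h2]
  ring

lemma conj_SS (k : ℕ) : (starRingEnd ℂ) (SS N k) = ∑ j ∈ range N, (j:ℂ) * ee N (-(j*k)) := by
  rw [SS, map_sum]
  apply sum_congr rfl
  intro j _
  rw [map_mul, ee_conj, Complex.conj_natCast]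

lemma claimB (hN : 0 < N) :
    ∑ k ∈ range N, SS N k * (starRingEnd ℂ) (SS N k) = N * ∑ j ∈ range N, (j:ℂ)^2 := by
  have expand : ∀ k ∈ range N, SS N k * (starRingEnd ℂ) (SS N k)
      = ∑ j ∈ range N, ∑ j' ∈ range N, (j:ℂ) * (j':ℂ) * ee N (((j:ℤ) - j') * k) := by
    intro k _
    rw [conj_SS, SS, sum_mul_sum]
    apply sum_congr rfl; intro j _
    apply sum_congr rfl; intro j' _
    rw [mul_mul_mul_comm, ← ee_add]
    congr 2
    push_cast; ring
  rw [sum_congr rfl expand, sum_comm]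
  have inner2 : ∀ j ∈ range N, ∑ k ∈ range N, ∑ j' ∈ range N, (j:ℂ) * (j':ℂ) * ee N (((j:ℤ) - j') * k)
      = (j:ℂ)^2 * N := by
    intro j hj
    rw [sum_comm]
    have step : ∀ j' ∈ range N, ∑ k ∈ range N, (j:ℂ) * (j':ℂ) * ee N (((j:ℤ) - j') * k)
        = if j = j' then (j:ℂ) * (j':ℂ) * N else 0 := by
      intro j' hj'
      rw [← mul_sum]
      by_cases h : j = j'
      · subst h
        simp only [sub_self, zero_mul, if_pos rfl]
        rw [ee_eq_one hN ⟨0, by ring⟩]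
        simp [mul_comm]
      · rw [if_neg h]
        have hdvd : ¬ (N:ℤ) ∣ ((j:ℤ) - j') := by
          intro hd
          have hj1 := mem_range.mp hj
          have hj2 := mem_range.mp hj'
          have := int_dvd_zero hd (by rw [abs_lt]; omega)
          omega
        rw [ee_orth hN hdvd, mul_zero]
    rw [sum_congr rfl step, sum_ite_eq (range N) j (fun j' => (j:ℂ) * (j':ℂ) * N), if_pos hj]
    ring
  rw [sum_congr rfl inner2, ← sum_mul]
  ring

lemma sumsq (n : ℕ) : ∑ j ∈ range n, (j : ℝ)^2 = (n:ℝ)*((n:ℝ)-1)*(2*(n:ℝ)-1)/6 := by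
  induction n with
  | zero => simp
  | succ n ih => rw [sum_range_succ, ih]; push_cast; ring

lemma sumid (n : ℕ) : ∑ j ∈ range n, (j : ℝ) = (n:ℝ)*((n:ℝ)-1)/2 := by
  induction n with
  | zero => simp
  | succ n ih => rw [sum_range_succ, ih]; push_cast; ring

lemma ee_real (t : ℤ) : ee N t = Complex.exp ((((2 * π * t / N : ℝ)) : ℂ) * Complex.I) := by
  rw [ee]
  congr 1
  push_cast
  ring

lemma normsq (k : ℕ) :
    (ee N k - 1) * (ee N (-(k:ℤ)) - 1) = ((4 * Real.sin (π * k / N)^2 : ℝ) : ℂ) := by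
  have hconj : ee N (-(k:ℤ)) = (starRingEnd ℂ) (ee N (k:ℤ)) := (ee_conj _).symm
  rw [hconj, ee_real, Complex.exp_mul_I, ← Complex.ofReal_cos, ← Complex.ofReal_sin]
  set θ : ℝ := 2 * π * (k:ℤ) / N with hθ
  have hcj : (starRingEnd ℂ) ((Real.cos θ : ℂ) + (Real.sin θ : ℂ) * Complex.I)
      = (Real.cos θ : ℂ) - (Real.sin θ : ℂ) * Complex.I := by
    rw [map_add, map_mul, Complex.conj_ofReal, Complex.conj_ofReal, Complex.conj_I]
    ring
  rw [hcj]
  have key : (Real.cos θ - 1)^2 + Real.sin θ^2 = 4 * Real.sin (π * k / N)^2 := by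
    have hhalf : π * (k:ℝ) / N = θ / 2 := by rw [hθ]; push_cast; ring
    rw [hhalf]
    have h1 : Real.cos θ = 2 * Real.cos (θ/2)^2 - 1 := by
      rw [← Real.cos_two_mul]; congr 1; ring
    have h2 : Real.sin θ = 2 * Real.sin (θ/2) * Real.cos (θ/2) := by
      rw [← Real.sin_two_mul]; congr 1; ring
    have h3 : Real.sin (θ/2)^2 + Real.cos (θ/2)^2 = 1 := Real.sin_sq_add_cos_sq _
    rw [h1, h2]
    linear_combination (4*Real.cos (θ/2)^2 - 4) * h3
  calc ((Real.cos θ:ℂ) + (Real.sin θ:ℂ) * Complex.I - 1) * ((Real.cos θ:ℂ) - (Real.sin θ:ℂ) * Complex.I - 1)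
      = (((Real.cos θ - 1)^2 + Real.sin θ^2 : ℝ) : ℂ) := by
        push_cast
        ring_nf
        rw [Complex.I_sq]
        ring
    _ = _ := by rw [key]

lemma claimC (hN : 0 < N) {k : ℕ} (hk1 : 1 ≤ k) (hk2 : k < N) :
    SS N k * (starRingEnd ℂ) (SS N k)
      = (((N:ℝ)^2 / (4 * Real.sin (π * k / N)^2) : ℝ) : ℂ) := by
  have hA := claimA hN hk1 hk2
  have hA' : (ee N (-(k:ℤ)) - 1) * (starRingEnd ℂ) (SS N k) = N := by
    have := congrArg (starRingEnd ℂ) hA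
    rw [map_mul, map_sub, ee_conj, map_one, Complex.conj_natCast] at this
    exact this
  have hmul : (((4 * Real.sin (π * k / N)^2 : ℝ)) : ℂ) * (SS N k * (starRingEnd ℂ) (SS N k))
      = (N:ℂ)^2 := by
    rw [← normsq]
    calc (ee N ↑k - 1) * (ee N (-(k:ℤ)) - 1) * (SS N k * (starRingEnd ℂ) (SS N k))
        = ((ee N ↑k - 1) * SS N k) * ((ee N (-(k:ℤ)) - 1) * (starRingEnd ℂ) (SS N k)) := by ring
      _ = (N:ℂ) * (N:ℂ) := by rw [hA, hA']
      _ = (N:ℂ)^2 := by ring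
  have hsin : Real.sin (π * k / N) ≠ 0 := by
    have h1 : 0 < π * k / N := by
      apply div_pos (by positivity) (by exact_mod_cast hN)
    have h2 : π * k / N < π := by
      rw [div_lt_iff₀ (by exact_mod_cast hN)]
      have : (k:ℝ) < N := by exact_mod_cast hk2
      nlinarith [Real.pi_pos]
    exact (Real.sin_pos_of_pos_of_lt_pi h1 h2).ne'
  have hne : (((4 * Real.sin (π * k / N)^2 : ℝ)) : ℂ) ≠ 0 := by
    simp only [ne_eq, Complex.ofReal_eq_zero]
    positivity
  rw [Complex.ofReal_div, eq_div_iff hne, mul_comm, hmul]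
  push_cast
  ring

lemma SS0 (hN : 0 < N) : SS N 0 = (((N:ℝ) * ((N:ℝ)-1)/2 : ℝ) : ℂ) := by
  rw [SS]
  have h0 : ee N 0 = 1 := ee_eq_one hN ⟨0, by ring⟩
  have h : ∀ j ∈ range N, (j:ℂ) * ee N ((j:ℤ) * ((0:ℕ):ℤ)) = (j:ℂ) := by
    intro j _
    simp [h0]
  rw [sum_congr rfl h, ← sumid N]
  push_cast
  rfl

lemma cscsum {N : ℕ} (hN : 2 ≤ N) :
    ∑ k ∈ Ico 1 N, (1 / Real.sin (π * k / N)^2) = ((N:ℝ)^2 - 1)/3 := by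
  have hN0 : 0 < N := by omega
  have hB := claimB (N := N) hN0
  have hsplitk : (∑ k ∈ range N, SS N k * (starRingEnd ℂ) (SS N k))
      = SS N 0 * (starRingEnd ℂ) (SS N 0)
        + ∑ k ∈ Ico 1 N, SS N k * (starRingEnd ℂ) (SS N k) := by
    rw [range_eq_Ico]
    exact sum_eq_sum_Ico_succ_bot hN0 _
  have hsplit : ∀ k ∈ Ico 1 N, SS N k * (starRingEnd ℂ) (SS N k)
      = (((N:ℝ)^2 / (4 * Real.sin (π * k / N)^2) : ℝ) : ℂ) := by
    intro k hk
    obtain ⟨h1, h2⟩ := mem_Ico.mp hk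
    exact claimC hN0 h1 h2
  rw [hsplitk, sum_congr rfl hsplit, SS0 hN0, Complex.conj_ofReal,
    ← Complex.ofReal_mul, ← Complex.ofReal_sum, ← Complex.ofReal_add] at hB
  have hR : (N:ℂ) * ∑ j ∈ range N, (j:ℂ)^2
      = (((N:ℝ) * ∑ j ∈ range N, (j:ℝ)^2 : ℝ) : ℂ) := by push_cast; ring
  rw [hR] at hB
  have hB2 := Complex.ofReal_inj.mp hB
  have hNr : (N:ℝ) ≠ 0 := by positivity
  have hptw : ∀ k ∈ Ico 1 N, (1 / Real.sin (π * k / N)^2)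
      = (4 / (N:ℝ)^2) * ((N:ℝ)^2 / (4 * Real.sin (π * k / N)^2)) := by
    intro k hk
    field_simp
  rw [sum_congr rfl hptw, ← mul_sum]
  have hsum : ∑ k ∈ Ico 1 N, (N:ℝ)^2 / (4 * Real.sin (π * k / N)^2)
      = (N:ℝ) * ∑ j ∈ range N, (j:ℝ)^2 - ((N:ℝ) * ((N:ℝ)-1)/2) * ((N:ℝ) * ((N:ℝ)-1)/2) := by
    linarith [hB2]
  rw [hsum, sumsq]
  field_simp
  ring

theorem trace_sq_quant_alternating_hilbert (N : ℕ) (hN : 2 ≤ N)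
    (A : Matrix (Fin N) (Fin N) ℝ)
    (hA : ∀ m n : Fin N, A m n =
      if m = n then 0 else Real.sin (π / N) / Real.sin (π * ((m : ℝ) - (n : ℝ)) / N)) :
    Matrix.trace (A * A) =
      -(Real.sin (π / N)) ^ 2 * (((N : ℝ) - 1) * N * ((N : ℝ) + 1) / 3) := by
  haveI : NeZero N := ⟨by omega⟩
  set s : ℝ := Real.sin (π / N) with hs
  set F : Fin N → ℝ := fun d => if d = 0 then 0 else -s^2 / (Real.sin (π * d.val / N))^2 with hF
  have hAF : ∀ m n : Fin N, A m n * A n m = F (m - n) := by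
    intro m n
    by_cases h : m = n
    · subst h
      rw [hA, if_pos rfl, hF]
      simp
    · have hsub : m - n ≠ 0 := sub_ne_zero.mpr h
      rw [hA, hA, if_neg h, if_neg (Ne.symm h), hF]
      simp only [if_neg hsub]
      have hneg : π * ((n:ℝ) - (m:ℝ)) / N = -(π * ((m:ℝ) - (n:ℝ)) / N) := by ring
      rw [hneg, Real.sin_neg]
      have hsq : (Real.sin (π * ((m:ℝ) - (n:ℝ)) / N))^2
          = (Real.sin (π * ((m - n : Fin N).val : ℝ) / N))^2 := by
        by_cases hle : n ≤ m
        · have hval : ((m - n : Fin N).val : ℕ) = m.val - n.val := Fin.coe_sub_iff_le.mpr hle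
          have : ((m - n : Fin N).val : ℝ) = (m:ℝ) - (n:ℝ) := by
            rw [hval, Nat.cast_sub (Fin.le_def.mp hle)]
          rw [this]
        · have hlt : m < n := lt_of_not_ge hle
          have hval : ((m - n : Fin N).val : ℕ) = N + m.val - n.val := Fin.coe_sub_iff_lt.mpr hlt
          have hcast : ((m - n : Fin N).val : ℝ) = (N:ℝ) + (m:ℝ) - (n:ℝ) := by
            rw [hval, Nat.cast_sub (by omega : n.val ≤ N + m.val)]
            push_cast; ring
          have harg : π * ((m - n : Fin N).val : ℝ) / N = π * ((m:ℝ) - (n:ℝ)) / N + π := by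
            rw [hcast]
            have hN0 : (N:ℝ) ≠ 0 := by positivity
            field_simp
            ring
          rw [harg, Real.sin_add_pi]
          ring
      rw [div_mul_div_comm, mul_neg, div_neg, ← sq, ← sq, hsq, neg_div]
  have htr : Matrix.trace (A * A) = ∑ m : Fin N, ∑ n : Fin N, F (m - n) := by
    rw [Matrix.trace]
    apply Finset.sum_congr rfl
    intro m _
    rw [Matrix.diag_apply, Matrix.mul_apply]
    exact Finset.sum_congr rfl fun n _ => hAF m n
  have hre : ∀ m : Fin N, ∑ n : Fin N, F (m - n) = ∑ d : Fin N, F d := by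
    intro m
    exact Fintype.sum_equiv (Equiv.subLeft m) _ F (fun n => rfl)
  rw [htr, Finset.sum_congr rfl (fun m _ => hre m), Finset.sum_const, Finset.card_univ,
    Fintype.card_fin, nsmul_eq_mul]
  have hFd : ∑ d : Fin N, F d = -s^2 * (((N:ℝ)^2 - 1)/3) := by
    have hfv : ∀ d : Fin N, F d = (fun k : ℕ => if k = 0 then 0 else -s^2 / (Real.sin (π * k / N))^2) d.val := by
      intro d
      rw [hF]
      simp only
      congr 1
      simp only [Fin.ext_iff, Fin.val_zero]
    rw [Finset.sum_congr rfl (fun d _ => hfv d),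
      Fin.sum_univ_eq_sum_range (fun k : ℕ => if k = 0 then (0:ℝ) else -s^2 / (Real.sin (π * k / N))^2) N]
    rw [Finset.range_eq_Ico, Finset.sum_eq_sum_Ico_succ_bot (by omega : 0 < N)]
    rw [if_pos rfl, zero_add]
    have hbody : ∀ k ∈ Finset.Ico 1 N, (if k = 0 then (0:ℝ) else -s^2 / (Real.sin (π * k / N))^2)
        = -s^2 * (1 / Real.sin (π * k / N)^2) := by
      intro k hk
      obtain ⟨h1, _⟩ := Finset.mem_Ico.mp hk
      rw [if_neg (by omega)]
      ring
    rw [Finset.sum_congr rfl hbody, ← Finset.mul_sum, cscsum hN]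
  rw [hFd]
  push_cast
  ring
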